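/- Let f: (0, ε) → R be a positive function with f(x) → 0 as x → 0+ satisfying f(x) ∼ A x^r for constants A > 0 and r > 0, r ≠ 1 (a strongly hyperbolic first-return map). Then any orbit x_{n+1} = f(x_n) converging to 0 monotonically, viewed as a subset of R, has Minkowski dimension 0. -/

import Mathlib

open Filter MeasureTheory Set

/-- Orbits of a strongly hyperbolic first-return map `f(x) ∼ A x^r` (`r > 0`, `r ≠ 1`)
converging monotonically to `0` have Minkowski dimension `0`. -/
theorem orbit_of_strongly_hyperbolic_map_dim_zero (ε A r : ℝ)
    (hε : 0 < ε) (hA : 0 < A) (hr : 0 < r) (hr1 : r ≠ 1)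
    (f : ℝ → ℝ) (hfpos : ∀ x ∈ Ioo (0 : ℝ) ε, 0 < f x)
    (hasymp : Tendsto (fun x => f x / (A * x ^ r)) (nhdsWithin 0 (Ioi 0)) (nhds 1))
    (x : ℕ → ℝ) (hx0 : ∀ n, x n ∈ Ioo (0 : ℝ) ε)
    (horb : ∀ n, x (n + 1) = f (x n))
    (hanti : StrictAnti x) (hlim : Tendsto x atTop (nhds 0)) :
    Tendsto
      (fun δ : ℝ => 1 - Real.log ((volume (Metric.thickening δ (Set.range x))).toReal) / Real.log δ)
      (nhdsWithin 0 (Ioi 0)) (nhds 0) := by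
  have hxpos : ∀ n, 0 < x n := fun n => (hx0 n).1
  -- the sequence tends to 0 within (0, ∞)
  have hx_to : Tendsto x atTop (nhdsWithin 0 (Ioi 0)) :=
    tendsto_nhdsWithin_of_tendsto_nhds_of_eventually_within _ hlim
      (Eventually.of_forall fun n => hxpos n)
  -- the basic asymptotic along the orbit
  have hB : Tendsto (fun n => x (n + 1) / (A * x n ^ r)) atTop (nhds 1) := by
    have := hasymp.comp hx_to
    refine this.congr fun n => ?_
    simp [Function.comp, horb n]
  -- r > 1
  have hr1' : 1 < r := by
    by_contra h
    have hrlt : r < 1 := lt_of_le_of_ne (not_lt.mp h) hr1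
    have h2 : Tendsto (fun y : ℝ => A * y ^ (r - 1)) (nhdsWithin 0 (Ioi 0)) atTop := by
      have hinv : Tendsto (fun y : ℝ => y⁻¹) (nhdsWithin (0:ℝ) (Ioi 0)) atTop :=
        tendsto_inv_nhdsGT_zero
      have hpow : Tendsto (fun z : ℝ => z ^ (1 - r)) atTop atTop :=
        tendsto_rpow_atTop (by linarith)
      have := (hpow.comp hinv).const_mul_atTop hA
      refine Tendsto.congr' ?_ this
      filter_upwards [self_mem_nhdsWithin] with y (hy : (0:ℝ) < y)
      simp only [Function.comp]
      congr 1
      rw [Real.inv_rpow hy.le, ← Real.rpow_neg hy.le]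
      norm_num
    have h3 : Tendsto (fun n => x (n + 1) / x n) atTop atTop := by
      have := hB.pos_mul_atTop one_pos (h2.comp hx_to)
      refine Tendsto.congr ?_ this
      intro n
      have hxn := hxpos n
      have hxr : (0:ℝ) < x n ^ r := Real.rpow_pos_of_pos hxn r
      simp only [Function.comp]
      rw [Real.rpow_sub hxn, Real.rpow_one]
      field_simp
    obtain ⟨n, hn⟩ := (h3.eventually_gt_atTop 1).exists
    have : x (n + 1) < x n := hanti (Nat.lt_succ_self n)
    have : x (n + 1) / x n < 1 := (div_lt_one (hxpos n)).mpr this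
    linarith
  -- the ratio tends to 0, hence eventual halving
  have hratio : Tendsto (fun n => x (n + 1) / x n) atTop (nhds 0) := by
    have h2 : Tendsto (fun y : ℝ => A * y ^ (r - 1)) (nhdsWithin 0 (Ioi 0)) (nhds 0) := by
      have hc : ContinuousAt (fun y : ℝ => y ^ (r - 1)) 0 :=
        Real.continuousAt_rpow_const 0 (r - 1) (Or.inr (by linarith))
      have : Tendsto (fun y : ℝ => y ^ (r - 1)) (nhdsWithin 0 (Ioi 0)) (nhds ((0:ℝ) ^ (r-1))) :=
        (hc.tendsto).mono_left nhdsWithin_le_nhds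
      rw [Real.zero_rpow (by intro hc0; exact absurd (by linarith : r = 1) hr1)] at this
      simpa using this.const_mul A
    have := hB.mul (h2.comp hx_to)
    rw [mul_zero] at this
    refine Tendsto.congr ?_ this
    intro n
    have hxn := hxpos n
    simp only [Function.comp]
    rw [Real.rpow_sub hxn, Real.rpow_one]
    field_simp
  have hhalf : ∀ᶠ n in atTop, x (n + 1) ≤ x n / 2 := by
    filter_upwards [hratio.eventually_le_const (show (0:ℝ) < 1/2 by norm_num)] with n hn
    have := hxpos n
    rw [div_le_iff₀ this] at hn
    linarith [hn]
  obtain ⟨N₀, hN₀⟩ := eventually_atTop.mp hhalf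
  set c := x N₀ with hc_def
  have hc : 0 < c := hxpos N₀
  -- geometric decay
  have hgeo : ∀ k, x (N₀ + k) ≤ c * (1 / 2) ^ k := by
    intro k
    induction k with
    | zero => simp [hc_def]
    | succ k ih =>
      have h1 : x (N₀ + k + 1) ≤ x (N₀ + k) / 2 := hN₀ _ (Nat.le_add_right _ _)
      calc x (N₀ + (k + 1)) = x (N₀ + k + 1) := by ring_nf
        _ ≤ x (N₀ + k) / 2 := h1
        _ ≤ (c * (1/2)^k) / 2 := by linarith
        _ = c * (1/2)^(k+1) := by ring
  -- the counting function
  set N : ℝ → ℕ := fun δ => N₀ + ⌈Real.logb 2 (c / δ)⌉₊ with hN_def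
  have key : ∀ δ : ℝ, 0 < δ → x (N δ) ≤ δ := by
    intro δ hδ
    set k := ⌈Real.logb 2 (c / δ)⌉₊ with hk_def
    have h1 : x (N₀ + k) ≤ c * (1/2)^k := hgeo k
    rcases le_or_gt c δ with h | h
    · calc x (N δ) ≤ c * (1/2)^k := h1
        _ ≤ c * 1 := by
            have : ((1:ℝ)/2)^k ≤ 1 := pow_le_one₀ (by norm_num) (by norm_num)
            nlinarith
        _ ≤ δ := by linarith
    · have hy : 1 < c / δ := (one_lt_div hδ).mpr h
      have h2 : c / δ ≤ 2 ^ k := by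
        have hlogb : (2:ℝ) ^ Real.logb 2 (c / δ) = c / δ :=
          Real.rpow_logb (by norm_num) (by norm_num) (by positivity)
        calc c / δ = (2:ℝ) ^ Real.logb 2 (c / δ) := hlogb.symm
          _ ≤ (2:ℝ) ^ (k : ℝ) :=
              Real.rpow_le_rpow_of_exponent_le one_le_two (Nat.le_ceil _)
          _ = (2:ℝ) ^ k := Real.rpow_natCast 2 k
      have hpow : (0:ℝ) < 2 ^ k := by positivity
      have : c ≤ δ * 2 ^ k := by
        rw [div_le_iff₀ hδ] at h2; linarith
      calc x (N δ) ≤ c * (1/2)^k := h1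
        _ = c / 2 ^ k := by rw [one_div, inv_pow, div_eq_mul_inv]
        _ ≤ δ := by rw [div_le_iff₀ hpow]; linarith
  -- volume bounds
  set g : ℝ → ℝ := fun δ => (volume (Metric.thickening δ (Set.range x))).toReal with hg_def
  have hvol : ∀ δ : ℝ, 0 < δ → 2 * δ ≤ g δ ∧ g δ ≤ (2 * N δ + 3) * δ := by
    intro δ hδ
    have hsub : Metric.thickening δ (Set.range x) ⊆
        (⋃ n ∈ Finset.range (N δ), Metric.ball (x n) δ) ∪ Ioo (-δ) (2 * δ) := by
      intro y hy
      rw [Metric.mem_thickening_iff] at hy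
      obtain ⟨z, ⟨n, rfl⟩, hdist⟩ := hy
      by_cases hn : n < N δ
      · left
        exact mem_biUnion (Finset.mem_range.mpr hn) (Metric.mem_ball.mpr hdist)
      · right
        push_neg at hn
        have hxn : x n ≤ δ := le_trans (hanti.antitone hn) (key δ hδ)
        have habs : |y - x n| < δ := by rwa [Real.dist_eq] at hdist
        rw [abs_lt] at habs
        constructor
        · have := hxpos n; linarith [habs.1]
        · linarith [habs.2]
    have hub : volume (Metric.thickening δ (Set.range x)) ≤
        ENNReal.ofReal ((2 * N δ + 3) * δ) := by
      calc volume (Metric.thickening δ (Set.range x))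
          ≤ volume ((⋃ n ∈ Finset.range (N δ), Metric.ball (x n) δ) ∪ Ioo (-δ) (2 * δ)) :=
            measure_mono hsub
        _ ≤ volume (⋃ n ∈ Finset.range (N δ), Metric.ball (x n) δ) + volume (Ioo (-δ) (2 * δ)) :=
            measure_union_le _ _
        _ ≤ (∑ n ∈ Finset.range (N δ), volume (Metric.ball (x n) δ)) + volume (Ioo (-δ) (2 * δ)) := by
            gcongr
            exact measure_biUnion_finset_le _ _
        _ = (N δ : ENNReal) * ENNReal.ofReal (2 * δ) + ENNReal.ofReal (3 * δ) := by
            simp [Real.volume_ball, Real.volume_Ioo, Finset.sum_const, nsmul_eq_mul]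
            congr 1
            ring_nf
            rw [ENNReal.ofReal_mul' (by norm_num), ENNReal.ofReal_ofNat]
        _ = ENNReal.ofReal ((2 * N δ + 3) * δ) := by
            rw [← ENNReal.ofReal_natCast (N δ), ← ENNReal.ofReal_mul (Nat.cast_nonneg _),
              ← ENNReal.ofReal_add (by positivity) (by positivity)]
            congr 1
            ring
    have hfin : volume (Metric.thickening δ (Set.range x)) ≠ ⊤ :=
      (hub.trans_lt ENNReal.ofReal_lt_top).ne
    constructor
    · have hball : Metric.ball (x 0) δ ⊆ Metric.thickening δ (Set.range x) :=
        Metric.ball_subset_thickening (mem_range_self 0) δ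
      have hle : ENNReal.ofReal (2 * δ) ≤ volume (Metric.thickening δ (Set.range x)) := by
        rw [← Real.volume_ball]
        exact measure_mono hball
      have := ENNReal.toReal_mono hfin hle
      rwa [ENNReal.toReal_ofReal (by positivity)] at this
    · have := ENNReal.toReal_mono ENNReal.ofReal_ne_top hub
      rwa [ENNReal.toReal_ofReal (by positivity)] at this
  -- constants for the upper bound
  have hlog2 : (0:ℝ) < Real.log 2 := Real.log_pos (by norm_num)
  set a : ℝ := 2 * N₀ + 5 + 2 * Real.log c / Real.log 2 with ha_def
  set b : ℝ := 2 / Real.log 2 with hb_def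
  have hb : 0 < b := by positivity
  have hNbd : ∀ δ : ℝ, δ ∈ Ioo (0:ℝ) (min 1 c) →
      (2 * N δ + 3 : ℝ) ≤ a + b * (-Real.log δ) := by
    intro δ ⟨hδ0, hδ1⟩
    have hδc : δ < c := lt_of_lt_of_le hδ1 (min_le_right _ _)
    have hy1 : 1 < c / δ := (one_lt_div hδ0).mpr hδc
    have hy0 : 0 ≤ Real.logb 2 (c / δ) := Real.logb_nonneg (by norm_num) hy1.le
    have hceil : (⌈Real.logb 2 (c / δ)⌉₊ : ℝ) ≤ Real.logb 2 (c / δ) + 1 :=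
      (Nat.ceil_lt_add_one hy0).le
    have hlogb_eq : Real.logb 2 (c / δ) = (Real.log c - Real.log δ) / Real.log 2 := by
      rw [Real.logb, Real.log_div (ne_of_gt hc) (ne_of_gt hδ0)]
    have hNcast : (N δ : ℝ) = (N₀ : ℝ) + (⌈Real.logb 2 (c / δ)⌉₊ : ℝ) := by
      simp [hN_def]
    rw [hNcast]
    have : (N₀:ℝ) + (⌈Real.logb 2 (c / δ)⌉₊ : ℝ)
        ≤ N₀ + (Real.log c - Real.log δ) / Real.log 2 + 1 := by
      rw [← hlogb_eq]; linarith
    have hexp : (Real.log c - Real.log δ) / Real.log 2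
        = Real.log c / Real.log 2 + (-Real.log δ) / Real.log 2 := by ring
    simp only [ha_def, hb_def]
    have key2 : (⌈Real.logb 2 (c / δ)⌉₊ : ℝ) ≤ (Real.log c - Real.log δ) / Real.log 2 + 1 := by
      rw [← hlogb_eq]; exact hceil
    have h3 : (2:ℝ) * (⌈Real.logb 2 (c / δ)⌉₊ : ℝ)
        ≤ 2 * ((Real.log c - Real.log δ) / Real.log 2) + 2 := by linarith
    have h4 : 2 * ((Real.log c - Real.log δ) / Real.log 2)
        = 2 * Real.log c / Real.log 2 + 2 / Real.log 2 * (-Real.log δ) := by ring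
    linarith
  -- the upper comparison function tends to 0
  have hneglog : Tendsto (fun δ : ℝ => -Real.log δ) (nhdsWithin 0 (Ioi 0)) atTop := by
    have := Real.tendsto_log_nhdsGT_zero
    exact tendsto_neg_atBot_atTop.comp this
  have hUpperAux : Tendsto (fun t : ℝ => Real.log (a + b * t) / t) atTop (nhds 0) := by
    have haff : Tendsto (fun t : ℝ => a + b * t) atTop atTop :=
      tendsto_atTop_add_const_left _ a ((tendsto_const_mul_atTop_of_pos hb).mpr tendsto_id)
    have h1 : (fun t : ℝ => Real.log (a + b * t)) =o[atTop] (fun t => a + b * t) :=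
      Real.isLittleO_log_id_atTop.comp_tendsto haff
    have h2 : (fun t : ℝ => a + b * t) =O[atTop] (fun t : ℝ => t) := by
      rw [Asymptotics.isBigO_iff]
      refine ⟨|a| + |b|, ?_⟩
      filter_upwards [eventually_ge_atTop (1:ℝ)] with t ht
      have ht0 : 0 ≤ t := by linarith
      rw [Real.norm_eq_abs, Real.norm_eq_abs, abs_of_nonneg ht0]
      calc |a + b * t| ≤ |a| + |b| * t := by
            refine (abs_add_le _ _).trans ?_
            rw [abs_mul, abs_of_nonneg ht0]
        _ ≤ (|a| + |b|) * t := by nlinarith [abs_nonneg a, abs_nonneg b]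
    exact (h1.trans_isBigO h2).tendsto_div_nhds_zero
  have hUpper : Tendsto (fun δ : ℝ => Real.log (a + b * (-Real.log δ)) / (-Real.log δ))
      (nhdsWithin 0 (Ioi 0)) (nhds 0) := hUpperAux.comp hneglog
  have hLower : Tendsto (fun δ : ℝ => Real.log 2 / (-Real.log δ))
      (nhdsWithin 0 (Ioi 0)) (nhds 0) := tendsto_const_nhds.div_atTop hneglog
  -- squeeze
  have hmem : Ioo (0:ℝ) (min 1 c) ∈ nhdsWithin (0:ℝ) (Ioi 0) :=
    Ioo_mem_nhdsGT_of_mem (Set.left_mem_Ico.mpr (lt_min one_pos hc))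
  refine tendsto_of_tendsto_of_tendsto_of_le_of_le' hLower hUpper ?_ ?_
  · filter_upwards [hmem] with δ hδ
    obtain ⟨hδ0, hδ1⟩ := hδ
    have hδlt1 : δ < 1 := lt_of_lt_of_le hδ1 (min_le_left _ _)
    have hL : Real.log δ < 0 := Real.log_neg hδ0 hδlt1
    have hden : 0 < -Real.log δ := by linarith
    obtain ⟨hg1, hg2⟩ := hvol δ hδ0
    have hgpos : 0 < g δ := lt_of_lt_of_le (by positivity) hg1
    have hlogg : Real.log 2 + Real.log δ ≤ Real.log (g δ) := by
      have : Real.log (2 * δ) ≤ Real.log (g δ) := Real.log_le_log (by positivity) hg1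
      rwa [Real.log_mul (by norm_num) (ne_of_gt hδ0)] at this
    have heq : 1 - Real.log (g δ) / Real.log δ
        = (Real.log (g δ) - Real.log δ) / (-Real.log δ) := by
      have hL0 : Real.log δ ≠ 0 := ne_of_lt hL
      field_simp
      ring
    show Real.log 2 / (-Real.log δ)
        ≤ 1 - Real.log ((volume (Metric.thickening δ (Set.range x))).toReal) / Real.log δ
    rw [show (volume (Metric.thickening δ (Set.range x))).toReal = g δ from rfl, heq,
      div_le_div_iff_of_pos_right hden]
    linarith
  · filter_upwards [hmem] with δ hδ
    obtain ⟨hδ0, hδ1⟩ := hδ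
    have hδlt1 : δ < 1 := lt_of_lt_of_le hδ1 (min_le_left _ _)
    have hL : Real.log δ < 0 := Real.log_neg hδ0 hδlt1
    have hden : 0 < -Real.log δ := by linarith
    obtain ⟨hg1, hg2⟩ := hvol δ hδ0
    have hgpos : 0 < g δ := lt_of_lt_of_le (by positivity) hg1
    have hNbd' := hNbd δ ⟨hδ0, hδ1⟩
    have hab : (3:ℝ) ≤ a + b * (-Real.log δ) := by
      have hcast : (0:ℝ) ≤ (N δ : ℝ) := Nat.cast_nonneg _
      have : (3:ℝ) ≤ 2 * N δ + 3 := by linarith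
      linarith
    have hlogg : Real.log (g δ) ≤ Real.log (a + b * (-Real.log δ)) + Real.log δ := by
      have h1 : Real.log (g δ) ≤ Real.log ((2 * N δ + 3) * δ) :=
        Real.log_le_log hgpos hg2
      rw [Real.log_mul (by positivity) (ne_of_gt hδ0)] at h1
      have h2 : Real.log (2 * N δ + 3) ≤ Real.log (a + b * (-Real.log δ)) :=
        Real.log_le_log (by positivity) hNbd'
      linarith
    have heq : 1 - Real.log (g δ) / Real.log δ
        = (Real.log (g δ) - Real.log δ) / (-Real.log δ) := by
      have hL0 : Real.log δ ≠ 0 := ne_of_lt hL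
      field_simp
      ring
    show 1 - Real.log ((volume (Metric.thickening δ (Set.range x))).toReal) / Real.log δ
        ≤ Real.log (a + b * (-Real.log δ)) / (-Real.log δ)
    rw [show (volume (Metric.thickening δ (Set.range x))).toReal = g δ from rfl, heq,
      div_le_div_iff_of_pos_right hden]
    linarith
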